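/- arXiv:2301.06297 — 2 statements merged into one kernel-verified Lean document; each statement's English description precedes it below -/
import Mathlib

section
/- (Contamination bound) Let X₁,…,X_n be points, I ∪ O a partition of {1,…,n}, μ̂_n = (1/n)Σᵢ δ_{Xᵢ} and μ̂_n^{(I)} = (1/|I|)Σ_{i∈I} δ_{Xᵢ}. Then for any probability measure μ, (|I|/n)·W^(λ)(μ, μ̂_n^{(I)}) − 2λ|O|/n ≤ W^(λ)(μ, μ̂_n) ≤ (|I|/n)·W^(λ)(μ, μ̂_n^{(I)}) + 2λ|O|/n. -/
open MeasureTheory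
open scoped ENNReal

/-- The robust Wasserstein distance `W^(λ)(μ,ν)`: the infimum over couplings `π`
of `μ` and `ν` of `∫ min (d x y) (2λ) dπ`. -/
noncomputable def robustW {X : Type*} [MetricSpace X] [MeasurableSpace X]
    (l : ℝ) (μ ν : Measure X) : ℝ :=
  sInf {r : ℝ | ∃ π : Measure (X × X), IsProbabilityMeasure π ∧
    π.map Prod.fst = μ ∧ π.map Prod.snd = ν ∧
    r = ∫ p, min (dist p.1 p.2) (2 * l) ∂π}

set_option linter.unusedSectionVars false
set_option linter.unusedVariables false
set_option maxHeartbeats 1600000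

section Aux
variable {X : Type*} [MetricSpace X] [MeasurableSpace X] [BorelSpace X]
  [SecondCountableTopology X] {l : ℝ}

lemma tc_cont : Continuous (fun p : X × X => min (dist p.1 p.2) (2 * l)) :=
  (continuous_fst.dist continuous_snd).min continuous_const

lemma tc_nonneg (hl : 0 < l) (p : X × X) : 0 ≤ min (dist p.1 p.2) (2 * l) :=
  le_min dist_nonneg (by linarith)

lemma tc_le (p : X × X) : min (dist p.1 p.2) (2 * l) ≤ 2 * l := min_le_right _ _

lemma tc_integrable (hl : 0 < l) (π : Measure (X × X)) [IsFiniteMeasure π] :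
    Integrable (fun p : X × X => min (dist p.1 p.2) (2 * l)) π := by
  refine (integrable_const (2 * l)).mono' tc_cont.aestronglyMeasurable ?_
  filter_upwards with p
  rw [Real.norm_of_nonneg (tc_nonneg hl p)]
  exact tc_le p

lemma tc_integral_le (hl : 0 < l) (π : Measure (X × X)) [IsProbabilityMeasure π] :
    ∫ p, min (dist p.1 p.2) (2 * l) ∂π ≤ 2 * l := by
  calc ∫ p, min (dist p.1 p.2) (2 * l) ∂π ≤ ∫ _, 2 * l ∂π :=
        integral_mono (tc_integrable hl π) (integrable_const _) tc_le
    _ = 2 * l := by simp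

lemma cost_mem {μ ν : Measure X} (π : Measure (X × X)) (hπ : IsProbabilityMeasure π)
    (h1 : π.map Prod.fst = μ) (h2 : π.map Prod.snd = ν) :
    (∫ p, min (dist p.1 p.2) (2 * l) ∂π) ∈
      {r : ℝ | ∃ π : Measure (X × X), IsProbabilityMeasure π ∧
        π.map Prod.fst = μ ∧ π.map Prod.snd = ν ∧
        r = ∫ p, min (dist p.1 p.2) (2 * l) ∂π} :=
  ⟨π, hπ, h1, h2, rfl⟩

lemma cost_bddBelow (hl : 0 < l) (μ ν : Measure X) :
    BddBelow {r : ℝ | ∃ π : Measure (X × X), IsProbabilityMeasure π ∧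
        π.map Prod.fst = μ ∧ π.map Prod.snd = ν ∧
        r = ∫ p, min (dist p.1 p.2) (2 * l) ∂π} := by
  refine ⟨0, fun r hr => ?_⟩
  obtain ⟨π, hπ, -, -, rfl⟩ := hr
  exact integral_nonneg (tc_nonneg hl)

lemma robustW_le_cost (hl : 0 < l) {μ ν : Measure X} (π : Measure (X × X))
    (hπ : IsProbabilityMeasure π) (h1 : π.map Prod.fst = μ) (h2 : π.map Prod.snd = ν) :
    robustW l μ ν ≤ ∫ p, min (dist p.1 p.2) (2 * l) ∂π :=
  csInf_le (cost_bddBelow hl μ ν) (cost_mem π hπ h1 h2)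

lemma robustW_nonneg (hl : 0 < l) (μ ν : Measure X)
    [IsProbabilityMeasure μ] [IsProbabilityMeasure ν] : 0 ≤ robustW l μ ν := by
  refine le_csInf ⟨_, cost_mem (μ.prod ν) inferInstance (by simp) (by simp)⟩ ?_
  rintro r ⟨π, hπ, -, -, rfl⟩
  exact integral_nonneg (tc_nonneg hl)

lemma robustW_ge {μ ν : Measure X} [IsProbabilityMeasure μ] [IsProbabilityMeasure ν]
    {b : ℝ} (h : ∀ π : Measure (X × X), IsProbabilityMeasure π →
      π.map Prod.fst = μ → π.map Prod.snd = ν →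
      b ≤ ∫ p, min (dist p.1 p.2) (2 * l) ∂π) :
    b ≤ robustW l μ ν := by
  refine le_csInf ⟨_, cost_mem (μ.prod ν) inferInstance (by simp) (by simp)⟩ ?_
  rintro r ⟨π, hπ, h1, h2, rfl⟩
  exact h π hπ h1 h2

lemma map_finset_sum_measure {α β ι : Type*} [MeasurableSpace α] [MeasurableSpace β]
    {f : α → β} (hf : Measurable f) (s : Finset ι) (μ : ι → Measure α) :
    (∑ i ∈ s, μ i).map f = ∑ i ∈ s, (μ i).map f := by
  ext t ht
  rw [Measure.map_apply hf ht, Measure.finset_sum_apply, Measure.finset_sum_apply]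
  exact Finset.sum_congr rfl fun i _ => (Measure.map_apply hf ht).symm

-- upper bound core
lemma upper_core (hl : 0 < l)
    {n : ℕ} (hn : 0 < n) (x : Fin n → X)
    (I O : Finset (Fin n)) (hdisj : Disjoint I O) (hunion : I ∪ O = Finset.univ)
    (hI : I.Nonempty)
    (μ : Measure X) [IsProbabilityMeasure μ]
    (μn μI : Measure X)
    (hμn : μn = ((n : ℝ≥0∞))⁻¹ • ∑ i : Fin n, Measure.dirac (x i))
    (hμI : μI = ((I.card : ℝ≥0∞))⁻¹ • ∑ i ∈ I, Measure.dirac (x i))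
    (π : Measure (X × X)) (hπ : IsProbabilityMeasure π)
    (h1 : π.map Prod.fst = μ) (h2 : π.map Prod.snd = μI) :
    robustW l μ μn ≤ ((I.card : ℝ) / n) * (∫ p, min (dist p.1 p.2) (2 * l) ∂π)
      + 2 * l * O.card / n := by
  have hn0 : (n : ℝ≥0∞) ≠ 0 := Nat.cast_ne_zero.2 hn.ne'
  have hnt : (n : ℝ≥0∞) ≠ ⊤ := ENNReal.natCast_ne_top n
  have hI0 : (I.card : ℝ≥0∞) ≠ 0 := Nat.cast_ne_zero.2 hI.card_pos.ne'
  have hIt : (I.card : ℝ≥0∞) ≠ ⊤ := ENNReal.natCast_ne_top _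
  have hcard : I.card + O.card = n := by
    rw [← Finset.card_union_of_disjoint hdisj, hunion, Finset.card_univ, Fintype.card_fin]
  set k : ℝ≥0∞ := (I.card : ℝ≥0∞) * (n : ℝ≥0∞)⁻¹ with hk
  have hkt : k ≠ ⊤ := ENNReal.mul_ne_top hIt (ENNReal.inv_ne_top.2 hn0)
  set π' : Measure (X × X) :=
    k • π + ((n : ℝ≥0∞))⁻¹ • ∑ i ∈ O, μ.prod (Measure.dirac (x i)) with hπ'
  have hfst : π'.map Prod.fst = μ := by
    rw [hπ', Measure.map_add _ _ measurable_fst, Measure.map_smul, Measure.map_smul,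
      map_finset_sum_measure measurable_fst, h1]
    have : ∀ i ∈ O, (μ.prod (Measure.dirac (x i))).map Prod.fst = μ := by
      intro i _
      rw [Measure.map_fst_prod]; simp
    rw [Finset.sum_congr rfl this, Finset.sum_const, ← Nat.cast_smul_eq_nsmul ℝ≥0∞,
      smul_smul, ← add_smul]
    have : k + (n : ℝ≥0∞)⁻¹ * O.card = 1 := by
      rw [hk, mul_comm ((n : ℝ≥0∞))⁻¹, ← add_mul]
      rw [show ((I.card : ℝ≥0∞) + O.card) = (n : ℝ≥0∞) by
        rw [← Nat.cast_add, hcard]]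
      exact ENNReal.mul_inv_cancel hn0 hnt
    rw [this, one_smul]
  have hsnd : π'.map Prod.snd = μn := by
    rw [hπ', Measure.map_add _ _ measurable_snd, Measure.map_smul, Measure.map_smul,
      map_finset_sum_measure measurable_snd, h2]
    have : ∀ i ∈ O, (μ.prod (Measure.dirac (x i))).map Prod.snd = Measure.dirac (x i) := by
      intro i _
      rw [Measure.map_snd_prod]; simp
    rw [Finset.sum_congr rfl this, hμn, hμI, smul_smul]
    have hkI : k * ((I.card : ℝ≥0∞))⁻¹ = ((n : ℝ≥0∞))⁻¹ := by
      rw [hk, mul_comm ((I.card : ℝ≥0∞)), mul_assoc, ENNReal.mul_inv_cancel hI0 hIt, mul_one]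
    rw [hkI, ← smul_add, ← Finset.sum_union hdisj, hunion]
  haveI hπ'p : IsProbabilityMeasure π' := by
    constructor
    have := congrArg (fun m : Measure X => m Set.univ) hfst
    simp only [Measure.map_apply measurable_fst MeasurableSet.univ, Set.preimage_univ] at this
    rw [this]; exact measure_univ
  have hint1 : Integrable (fun p : X × X => min (dist p.1 p.2) (2 * l)) (k • π) :=
    (tc_integrable hl π).smul_measure hkt
  have hintsum : Integrable (fun p : X × X => min (dist p.1 p.2) (2 * l))
      (∑ i ∈ O, μ.prod (Measure.dirac (x i))) := by
    rw [integrable_finset_sum_measure]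
    intro i _
    exact tc_integrable hl _
  have hint2 : Integrable (fun p : X × X => min (dist p.1 p.2) (2 * l))
      (((n : ℝ≥0∞))⁻¹ • ∑ i ∈ O, μ.prod (Measure.dirac (x i))) :=
    hintsum.smul_measure (ENNReal.inv_ne_top.2 hn0)
  have hcost : ∫ p, min (dist p.1 p.2) (2 * l) ∂π' ≤
      ((I.card : ℝ) / n) * (∫ p, min (dist p.1 p.2) (2 * l) ∂π) + 2 * l * O.card / n := by
    rw [hπ', integral_add_measure hint1 hint2, integral_smul_measure, integral_smul_measure,
      integral_finset_sum_measure (fun i _ => tc_integrable hl _)]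
    have hkr : k.toReal = (I.card : ℝ) / n := by
      rw [hk, ENNReal.toReal_mul, ENNReal.toReal_inv]
      simp [div_eq_mul_inv]
    have hnr : ((n : ℝ≥0∞))⁻¹.toReal = 1 / (n : ℝ) := by
      rw [ENNReal.toReal_inv]; simp
    rw [hkr, hnr, smul_eq_mul, smul_eq_mul]
    have hbound : ∑ i ∈ O, ∫ p, min (dist p.1 p.2) (2 * l) ∂(μ.prod (Measure.dirac (x i)))
        ≤ (O.card : ℝ) * (2 * l) := by
      calc ∑ i ∈ O, ∫ p, min (dist p.1 p.2) (2 * l) ∂(μ.prod (Measure.dirac (x i)))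
          ≤ ∑ _i ∈ O, 2 * l := Finset.sum_le_sum fun i _ => tc_integral_le hl _
        _ = (O.card : ℝ) * (2 * l) := by rw [Finset.sum_const, nsmul_eq_mul]
    have hn' : (0 : ℝ) < n := Nat.cast_pos.2 hn
    have := mul_le_mul_of_nonneg_left hbound (by positivity : (0:ℝ) ≤ 1 / n)
    calc ((I.card : ℝ) / n) * (∫ p, min (dist p.1 p.2) (2 * l) ∂π)
          + 1 / (n : ℝ) * ∑ i ∈ O, ∫ p, min (dist p.1 p.2) (2 * l) ∂(μ.prod (Measure.dirac (x i)))
        ≤ ((I.card : ℝ) / n) * (∫ p, min (dist p.1 p.2) (2 * l) ∂π)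
          + 1 / (n : ℝ) * ((O.card : ℝ) * (2 * l)) := by linarith
      _ = ((I.card : ℝ) / n) * (∫ p, min (dist p.1 p.2) (2 * l) ∂π) + 2 * l * O.card / n := by
          ring
  exact (robustW_le_cost hl π' hπ'p hfst hsnd).trans hcost

lemma lower_core (hl : 0 < l)
    {n : ℕ} (hn : 0 < n) (x : Fin n → X)
    (I O : Finset (Fin n)) (hdisj : Disjoint I O) (hunion : I ∪ O = Finset.univ)
    (hI : I.Nonempty)
    (μ : Measure X) [IsProbabilityMeasure μ]
    (μn μI : Measure X) [IsProbabilityMeasure μI]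
    (hμn : μn = ((n : ℝ≥0∞))⁻¹ • ∑ i : Fin n, Measure.dirac (x i))
    (hμI : μI = ((I.card : ℝ≥0∞))⁻¹ • ∑ i ∈ I, Measure.dirac (x i))
    (π : Measure (X × X)) (hπ : IsProbabilityMeasure π)
    (h1 : π.map Prod.fst = μ) (h2 : π.map Prod.snd = μn) :
    robustW l μ μI ≤ (∫ p, min (dist p.1 p.2) (2 * l) ∂π) + 2 * l * O.card / n := by
  classical
  have hn0 : (n : ℝ≥0∞) ≠ 0 := Nat.cast_ne_zero.2 hn.ne'
  have hnt : (n : ℝ≥0∞) ≠ ⊤ := ENNReal.natCast_ne_top n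
  have hI0 : (I.card : ℝ≥0∞) ≠ 0 := Nat.cast_ne_zero.2 hI.card_pos.ne'
  have hIt : (I.card : ℝ≥0∞) ≠ ⊤ := ENNReal.natCast_ne_top _
  set T : Finset X := Finset.image x Finset.univ with hT
  set ρ : X → Measure (X × X) := fun y => π.restrict (Prod.snd ⁻¹' {y}) with hρ
  set w : X → ℝ≥0∞ := fun y => π (Prod.snd ⁻¹' {y}) with hw
  set a : X → ℝ≥0∞ :=
    fun y => ((I.filter (fun i => x i = y)).card : ℝ≥0∞) * (n : ℝ≥0∞)⁻¹ with ha
  set θ : X → ℝ≥0∞ := fun y => a y / w y with hθ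
  -- basic measure computations
  have hwval : ∀ y : X, w y =
      ((Finset.univ.filter (fun i : Fin n => x i = y)).card : ℝ≥0∞) * (n : ℝ≥0∞)⁻¹ := by
    intro y
    have hwy : w y = μn {y} := by
      show π (Prod.snd ⁻¹' {y}) = μn {y}
      rw [← Measure.map_apply measurable_snd (measurableSet_singleton y), h2]
    rw [hwy, hμn, Measure.smul_apply, Measure.finset_sum_apply]
    have hd : ∀ i : Fin n, Measure.dirac (x i) {y} = if x i = y then 1 else 0 := by
      intro i
      by_cases h : x i = y
      · simp [h]
      · rw [Measure.dirac_apply' _ (measurableSet_singleton y)]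
        simp [h]
    rw [Finset.sum_congr rfl fun i _ => hd i, Finset.sum_boole, smul_eq_mul, mul_comm]
  -- key decomposition
  have hwne : ∀ y, w y ≠ ⊤ := fun y => measure_ne_top π _
  have haw : ∀ y, a y ≤ w y := by
    intro y
    rw [hwval y, ha]
    refine mul_le_mul_left ?_ _
    have := Finset.card_le_card (Finset.filter_subset_filter
      (fun i => x i = y) (Finset.subset_univ I))
    exact_mod_cast this
  have hw0 : ∀ y ∈ T, w y ≠ 0 := by
    intro y hy
    rw [hwval y]
    obtain ⟨i, -, rfl⟩ := Finset.mem_image.1 hy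
    have : i ∈ Finset.univ.filter (fun j : Fin n => x j = x i) := by
      simp
    have hcpos : 0 < (Finset.univ.filter (fun j : Fin n => x j = x i)).card :=
      Finset.card_pos.2 ⟨i, this⟩
    exact mul_ne_zero (Nat.cast_ne_zero.2 hcpos.ne') (ENNReal.inv_ne_zero.2 hnt)
  have hθ1 : ∀ y ∈ T, θ y ≤ 1 := by
    intro y hy
    exact ENNReal.div_le_of_le_mul (by rw [one_mul]; exact haw y)
  have hθw : ∀ y ∈ T, θ y * w y = a y := fun y hy =>
    ENNReal.div_mul_cancel (hw0 y hy) (hwne y)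
  have hmemT : ∀ i : Fin n, x i ∈ T := fun i => Finset.mem_image_of_mem x (Finset.mem_univ i)
  have hsing : ∀ y : X, MeasurableSet (Prod.snd ⁻¹' {y} : Set (X × X)) :=
    fun y => measurable_snd (measurableSet_singleton y)
  have hdecomp : π = ∑ y ∈ T, ρ y := by
    ext s hs
    rw [Measure.finset_sum_apply]
    have hnull : π ((Prod.snd ⁻¹' (↑T : Set X))ᶜ) = 0 := by
      rw [← Set.preimage_compl, ← Measure.map_apply measurable_snd
        (T.measurableSet.compl), h2, hμn]
      rw [Measure.smul_apply, Measure.finset_sum_apply]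
      have hz : ∀ i : Fin n, Measure.dirac (x i) ((↑T : Set X)ᶜ) = 0 := by
        intro i
        rw [Measure.dirac_apply' _ T.measurableSet.compl]
        have hxT : x i ∉ ((↑T : Set X)ᶜ) := fun h => h (hmemT i)
        simp [hxT]
      simp [hz]
    have h1' : π s = π (s ∩ Prod.snd ⁻¹' (↑T : Set X)) :=
      (measure_inter_conull hnull).symm
    have h2' : s ∩ Prod.snd ⁻¹' (↑T : Set X) = ⋃ y ∈ T, s ∩ Prod.snd ⁻¹' {y} := by
      ext p
      simp only [Set.mem_inter_iff, Set.mem_preimage, Finset.mem_coe, Set.mem_iUnion,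
        Set.mem_singleton_iff]
      constructor
      · rintro ⟨hps, hpT⟩
        exact ⟨p.2, hpT, hps, rfl⟩
      · rintro ⟨y, hy, hps, hpy⟩
        exact ⟨hps, by rw [hpy]; exact hy⟩
    rw [h1', h2', measure_biUnion_finset ?_ (fun y _ => hs.inter (hsing y))]
    · exact Finset.sum_congr rfl fun y _ => (Measure.restrict_apply hs).symm
    · intro y _ z _ hyz
      refine Set.disjoint_left.2 fun p hp hp' => hyz ?_
      rw [← hp.2, ← hp'.2]
  have hcard : I.card + O.card = n := by
    rw [← Finset.card_union_of_disjoint hdisj, hunion, Finset.card_univ, Fintype.card_fin]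
  have hρuniv : ∀ y, ρ y Set.univ = w y := by
    intro y
    show π.restrict _ Set.univ = _
    rw [Measure.restrict_apply_univ]
  have hsumI : (∑ y ∈ T, ((I.filter (fun i => x i = y)).card : ℝ≥0∞) • Measure.dirac y)
      = ∑ i ∈ I, Measure.dirac (x i) := by
    rw [← Finset.sum_fiberwise_of_maps_to (fun i (_ : i ∈ I) => hmemT i)
      (fun i => Measure.dirac (x i))]
    refine Finset.sum_congr rfl fun y _ => ?_
    rw [Finset.sum_congr rfl (fun i hi => by rw [(Finset.mem_filter.1 hi).2]),
      Finset.sum_const, Nat.cast_smul_eq_nsmul ℝ≥0∞]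
  have hwa : ∀ y, w y - a y = ((O.filter (fun i => x i = y)).card : ℝ≥0∞) * (n : ℝ≥0∞)⁻¹ := by
    intro y
    rw [hwval y]
    have hsplit : (Finset.univ.filter (fun i : Fin n => x i = y)).card
        = (I.filter (fun i => x i = y)).card + (O.filter (fun i => x i = y)).card := by
      rw [← Finset.card_union_of_disjoint (Finset.disjoint_filter_filter hdisj),
        ← Finset.filter_union, hunion]
    rw [hsplit]
    show ((((I.filter (fun i => x i = y)).card + (O.filter (fun i => x i = y)).card : ℕ)
      : ℝ≥0∞)) * (n : ℝ≥0∞)⁻¹ - a y = _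
    rw [Nat.cast_add, add_mul, ha]
    exact ENNReal.add_sub_cancel_left
      (ENNReal.mul_ne_top (ENNReal.natCast_ne_top _) (ENNReal.inv_ne_top.2 hn0))
  have hOsum : ∑ y ∈ T, (w y - a y) = (O.card : ℝ≥0∞) * (n : ℝ≥0∞)⁻¹ := by
    rw [Finset.sum_congr rfl fun y _ => hwa y, ← Finset.sum_mul, ← Nat.cast_sum]
    congr 2
    exact (Finset.card_eq_sum_card_fiberwise (fun i (hi : i ∈ O) => hmemT i)).symm
  -- the transported coupling
  set e : X → X × X → X × X := fun y p => (p.1, y) with he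
  have hemeas : ∀ y : X, Measurable (e y) := fun y => measurable_fst.prodMk measurable_const
  set πmain : Measure (X × X) := ∑ y ∈ T, ((θ y • ρ y).map (e y)) with hπmain
  set ρrem : Measure X := (∑ y ∈ T, ((1 - θ y) • ρ y)).map Prod.fst with hρrem
  set π' : Measure (X × X) := πmain + ρrem.prod μI with hπ'def
  have hθwsub : ∀ y ∈ T, (1 - θ y) * w y = w y - a y := by
    intro y hy
    rw [ENNReal.sub_mul (fun _ _ => hwne y), one_mul, hθw y hy]
  have hremuniv : ρrem Set.univ = (O.card : ℝ≥0∞) * (n : ℝ≥0∞)⁻¹ := by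
    rw [hρrem, Measure.map_apply measurable_fst MeasurableSet.univ, Set.preimage_univ,
      Measure.finset_sum_apply]
    rw [Finset.sum_congr rfl (fun y hy => by
      rw [Measure.smul_apply, hρuniv y, smul_eq_mul, hθwsub y hy])]
    exact hOsum
  haveI hρremfin : IsFiniteMeasure ρrem := by
    constructor
    rw [hremuniv]
    exact ENNReal.mul_lt_top (ENNReal.natCast_lt_top _) (ENNReal.inv_lt_top.2
      (by exact_mod_cast hn))
  have hfst : π'.map Prod.fst = μ := by
    rw [hπ'def, Measure.map_add _ _ measurable_fst, hπmain, map_finset_sum_measure measurable_fst,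
      Measure.map_fst_prod, measure_univ, one_smul, hρrem]
    have e1 : ∀ y ∈ T, ((θ y • ρ y).map (e y)).map Prod.fst = θ y • (ρ y).map Prod.fst := by
      intro y _
      rw [Measure.map_map measurable_fst (hemeas y), Measure.map_smul]
      rfl
    have e2 : ∀ y ∈ T, ((1 - θ y) • ρ y).map Prod.fst = (1 - θ y) • (ρ y).map Prod.fst :=
      fun y _ => Measure.map_smul _ _ _
    rw [Finset.sum_congr rfl e1, map_finset_sum_measure measurable_fst, Finset.sum_congr rfl e2,
      ← Finset.sum_add_distrib]
    have e3 : ∀ y ∈ T, θ y • (ρ y).map Prod.fst + (1 - θ y) • (ρ y).map Prod.fst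
        = (ρ y).map Prod.fst := by
      intro y hy
      rw [← add_smul, add_tsub_cancel_of_le (hθ1 y hy), one_smul]
    rw [Finset.sum_congr rfl e3, ← map_finset_sum_measure measurable_fst, ← hdecomp, h1]
  have hsnd : π'.map Prod.snd = μI := by
    rw [hπ'def, Measure.map_add _ _ measurable_snd, hπmain, map_finset_sum_measure measurable_snd,
      Measure.map_snd_prod, hremuniv]
    have hpiece : ∀ y ∈ T, ((θ y • ρ y).map (e y)).map Prod.snd = a y • Measure.dirac y := by
      intro y hy
      rw [Measure.map_map measurable_snd (hemeas y)]
      have hce : (Prod.snd ∘ e y) = fun _ : X × X => y := rfl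
      rw [hce, Measure.map_const, Measure.smul_apply, hρuniv y, smul_eq_mul, hθw y hy]
    rw [Finset.sum_congr rfl hpiece]
    have hsum1 : (∑ y ∈ T, a y • Measure.dirac y)
        = ((I.card : ℝ≥0∞) * (n : ℝ≥0∞)⁻¹) • μI := by
      have e4 : ∀ y ∈ T, a y • Measure.dirac y
          = (n : ℝ≥0∞)⁻¹ • ((((I.filter (fun i => x i = y)).card : ℝ≥0∞)) • Measure.dirac y) := by
        intro y _
        rw [smul_smul, ha, mul_comm]
      rw [Finset.sum_congr rfl e4, ← Finset.smul_sum, hsumI, hμI, smul_smul]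
      congr 1
      rw [mul_comm ((I.card : ℝ≥0∞)) ((n : ℝ≥0∞))⁻¹, mul_assoc,
        ENNReal.mul_inv_cancel hI0 hIt, mul_one]
    rw [hsum1, ← add_smul]
    have hone : (I.card : ℝ≥0∞) * (n : ℝ≥0∞)⁻¹ + (O.card : ℝ≥0∞) * (n : ℝ≥0∞)⁻¹ = 1 := by
      rw [← add_mul, show ((I.card : ℝ≥0∞) + O.card) = (n : ℝ≥0∞) from by
        rw [← Nat.cast_add, hcard]]
      exact ENNReal.mul_inv_cancel hn0 hnt
    rw [hone, one_smul]
  haveI hπ'p : IsProbabilityMeasure π' := by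
    constructor
    have := congrArg (fun m : Measure X => m Set.univ) hfst
    simp only [Measure.map_apply measurable_fst MeasurableSet.univ, Set.preimage_univ] at this
    rw [this]
    exact measure_univ
  -- integrability
  have hintπ' := tc_integrable hl π'
  have hint_main : Integrable (fun p : X × X => min (dist p.1 p.2) (2 * l)) πmain :=
    hintπ'.mono_measure (by rw [hπ'def]; exact Measure.le_add_right le_rfl)
  have hint_each : ∀ y ∈ T,
      Integrable (fun p : X × X => min (dist p.1 p.2) (2 * l)) ((θ y • ρ y).map (e y)) := by
    rw [hπmain, integrable_finset_sum_measure] at hint_main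
    exact hint_main
  have hint_main' : Integrable (fun p : X × X => min (dist p.1 p.2) (2 * l)) πmain :=
    hintπ'.mono_measure (by rw [hπ'def]; exact Measure.le_add_right le_rfl)
  have hint_prod : Integrable (fun p : X × X => min (dist p.1 p.2) (2 * l)) (ρrem.prod μI) :=
    tc_integrable hl _
  -- cost estimate
  have hpiece_cost : ∀ y ∈ T,
      ∫ p, min (dist p.1 p.2) (2 * l) ∂((θ y • ρ y).map (e y))
        ≤ ∫ p, min (dist p.1 p.2) (2 * l) ∂(ρ y) := by
    intro y hy
    rw [integral_map (hemeas y).aemeasurable tc_cont.aestronglyMeasurable,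
      integral_smul_measure]
    have hae : ∫ p, min (dist ((e y) p).1 ((e y) p).2) (2 * l) ∂(ρ y)
        = ∫ p, min (dist p.1 p.2) (2 * l) ∂(ρ y) := by
      refine integral_congr_ae ?_
      filter_upwards [ae_restrict_mem (hsing y)] with p hp
      have hp2 : p.2 = y := hp
      show min (dist p.1 y) (2 * l) = min (dist p.1 p.2) (2 * l)
      rw [hp2]
    rw [hae, smul_eq_mul]
    have hθr : (θ y).toReal ≤ 1 := by
      have := ENNReal.toReal_mono ENNReal.one_ne_top (hθ1 y hy)
      simpa using this
    have hnonneg : 0 ≤ ∫ p, min (dist p.1 p.2) (2 * l) ∂(ρ y) :=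
      integral_nonneg (tc_nonneg hl)
    nlinarith [hnonneg, hθr, ENNReal.toReal_nonneg (a := θ y)]
  have hsumρ : ∑ y ∈ T, ∫ p, min (dist p.1 p.2) (2 * l) ∂(ρ y)
      = ∫ p, min (dist p.1 p.2) (2 * l) ∂π := by
    conv_rhs => rw [hdecomp]
    rw [integral_finset_sum_measure (fun y _ => (tc_integrable hl π).restrict)]
  have h2nd : ∫ p, min (dist p.1 p.2) (2 * l) ∂(ρrem.prod μI) ≤ 2 * l * O.card / n := by
    have hmass : (ρrem.prod μI) Set.univ = (O.card : ℝ≥0∞) * (n : ℝ≥0∞)⁻¹ := by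
      rw [← Set.univ_prod_univ, Measure.prod_prod, hremuniv, measure_univ, mul_one]
    calc ∫ p, min (dist p.1 p.2) (2 * l) ∂(ρrem.prod μI)
        ≤ ∫ _, 2 * l ∂(ρrem.prod μI) :=
          integral_mono hint_prod (integrable_const _) tc_le
      _ = ((ρrem.prod μI) Set.univ).toReal * (2 * l) := by
          rw [integral_const, smul_eq_mul, Measure.real]
      _ = 2 * l * O.card / n := by
          rw [hmass, ENNReal.toReal_mul, ENNReal.toReal_inv]
          simp only [ENNReal.toReal_natCast]
          ring
  have hcost : ∫ p, min (dist p.1 p.2) (2 * l) ∂π'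
      ≤ (∫ p, min (dist p.1 p.2) (2 * l) ∂π) + 2 * l * O.card / n := by
    rw [hπ'def, integral_add_measure hint_main' hint_prod, hπmain,
      integral_finset_sum_measure hint_each]
    have hmainle : ∑ y ∈ T, ∫ p, min (dist p.1 p.2) (2 * l) ∂((θ y • ρ y).map (e y))
        ≤ ∫ p, min (dist p.1 p.2) (2 * l) ∂π := by
      rw [← hsumρ]
      exact Finset.sum_le_sum hpiece_cost
    linarith [h2nd, hmainle]
  exact (robustW_le_cost hl π' hπ'p hfst hsnd).trans hcost
end Aux

/-- Contamination bound: with `μ̂_n` the full empirical measure and `μ̂_n^{(I)}`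
the empirical measure of the inliers,
`(|I|/n)·W^(λ)(μ, μ̂_n^{(I)}) − 2λ|O|/n ≤ W^(λ)(μ, μ̂_n) ≤
 (|I|/n)·W^(λ)(μ, μ̂_n^{(I)}) + 2λ|O|/n`. -/
theorem robustW_contamination_bound {X : Type*} [MetricSpace X] [PolishSpace X]
    [MeasurableSpace X] [BorelSpace X] (l : ℝ) (hl : 0 < l)
    (n : ℕ) (hn : 0 < n) (x : Fin n → X)
    (I O : Finset (Fin n)) (hdisj : Disjoint I O) (hunion : I ∪ O = Finset.univ)
    (hI : I.Nonempty)
    (μ : Measure X) [IsProbabilityMeasure μ]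
    (μn μI : Measure X)
    (hμn : μn = ((n : ℝ≥0∞))⁻¹ • ∑ i : Fin n, Measure.dirac (x i))
    (hμI : μI = ((I.card : ℝ≥0∞))⁻¹ • ∑ i ∈ I, Measure.dirac (x i)) :
    ((I.card : ℝ) / n) * robustW l μ μI - 2 * l * O.card / n ≤ robustW l μ μn ∧
    robustW l μ μn ≤ ((I.card : ℝ) / n) * robustW l μ μI + 2 * l * O.card / n := by
  have hn0 : (n : ℝ≥0∞) ≠ 0 := Nat.cast_ne_zero.2 hn.ne'
  have hnt : (n : ℝ≥0∞) ≠ ⊤ := ENNReal.natCast_ne_top n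
  have hI0 : (I.card : ℝ≥0∞) ≠ 0 := Nat.cast_ne_zero.2 hI.card_pos.ne'
  have hIt : (I.card : ℝ≥0∞) ≠ ⊤ := ENNReal.natCast_ne_top _
  haveI hμIP : IsProbabilityMeasure μI := by
    constructor
    rw [hμI, Measure.smul_apply, Measure.finset_sum_apply]
    have hone : ∀ i ∈ I, Measure.dirac (x i) Set.univ = 1 := fun i _ => by simp
    rw [Finset.sum_congr rfl hone, Finset.sum_const, nsmul_eq_mul, mul_one, smul_eq_mul,
      ENNReal.inv_mul_cancel hI0 hIt]
  haveI hμnP : IsProbabilityMeasure μn := by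
    constructor
    rw [hμn, Measure.smul_apply, Measure.finset_sum_apply]
    have hone : ∀ i ∈ Finset.univ, Measure.dirac (x i) Set.univ = 1 := fun i _ => by simp
    rw [Finset.sum_congr rfl hone, Finset.sum_const, nsmul_eq_mul, mul_one, smul_eq_mul,
      Finset.card_univ, Fintype.card_fin, ENNReal.inv_mul_cancel hn0 hnt]
  have hnR : (0 : ℝ) < n := Nat.cast_pos.2 hn
  have hkpos : (0 : ℝ) < (I.card : ℝ) / n := by
    apply div_pos _ hnR
    exact_mod_cast hI.card_pos
  have hIcard_le : I.card ≤ n := by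
    have := Finset.card_le_card (Finset.subset_univ I)
    simpa using this
  have hk1 : (I.card : ℝ) / n ≤ 1 := by
    rw [div_le_one hnR]
    exact_mod_cast hIcard_le
  constructor
  · -- lower bound
    have hWI0 : 0 ≤ robustW l μ μI := robustW_nonneg hl μ μI
    have hlow : robustW l μ μI - 2 * l * O.card / n ≤ robustW l μ μn := by
      refine robustW_ge ?_
      intro π hπ h1 h2
      have := lower_core hl hn x I O hdisj hunion hI μ μn μI hμn hμI π hπ h1 h2
      linarith
    have := mul_le_of_le_one_left hWI0 hk1
    linarith
  · -- upper bound
    have hkey : ∀ r ∈ {r : ℝ | ∃ π : Measure (X × X), IsProbabilityMeasure π ∧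
        π.map Prod.fst = μ ∧ π.map Prod.snd = μI ∧
        r = ∫ p, min (dist p.1 p.2) (2 * l) ∂π},
        robustW l μ μn ≤ ((I.card : ℝ) / n) * r + 2 * l * O.card / n := by
      rintro r ⟨π, hπ, h1, h2, rfl⟩
      exact upper_core hl hn x I O hdisj hunion hI μ μn μI hμn hμI π hπ h1 h2
    have hne : ∃ r, r ∈ {r : ℝ | ∃ π : Measure (X × X), IsProbabilityMeasure π ∧
        π.map Prod.fst = μ ∧ π.map Prod.snd = μI ∧
        r = ∫ p, min (dist p.1 p.2) (2 * l) ∂π} :=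
      ⟨_, cost_mem (μ.prod μI) inferInstance (by simp) (by simp)⟩
    have h3 : (robustW l μ μn - 2 * l * O.card / n) / ((I.card : ℝ) / n)
        ≤ robustW l μ μI := by
      refine le_csInf hne ?_
      intro r hr
      rw [div_le_iff₀ hkpos]
      have := hkey r hr
      linarith
    rw [div_le_iff₀ hkpos] at h3
    linarith [h3, mul_comm (robustW l μ μI) ((I.card : ℝ) / n)]
end

section
/- (Bounded differences for W^(λ)) Let μ be a probability measure, X = (X₁,…,X_m) and X' differ only in the j-th coordinate, with empirical measures μ̂ = (1/m)Σ δ_{Xᵢ} and μ̂' the empirical measure of X'. Then |W^(λ)(μ, μ̂) − W^(λ)(μ, μ̂')| ≤ min{d(X_j, X_j'), 2λ}/m. -/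
open MeasureTheory
open scoped ENNReal

section Aux

variable {X : Type*} [MetricSpace X] [MeasurableSpace X] [BorelSpace X]
  [SecondCountableTopology X]

private lemma cost_cont (l : ℝ) :
    Continuous (fun p : X × X => min (dist p.1 p.2) (2 * l)) :=
  (continuous_fst.dist continuous_snd).min continuous_const

private lemma cost_integ {l : ℝ} (hl : 0 < l) (φ : X × X → ℝ) (hφ : Continuous φ)
    (h0 : ∀ p, 0 ≤ φ p) (h2 : ∀ p, φ p ≤ 2 * l)
    (κ : Measure (X × X)) [IsFiniteMeasure κ] : Integrable φ κ :=
  (integrable_const (2 * l)).mono' hφ.aestronglyMeasurable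
    (ae_of_all _ fun p => by
      rw [Real.norm_eq_abs, abs_le]; exact ⟨by linarith [h0 p], h2 p⟩)

private lemma min_tri (a bb bb' : X) {L : ℝ} (hL : 0 ≤ L) :
    min (dist a bb) L ≤ min (dist a bb') L + min (dist bb bb') L := by
  have ht := dist_triangle a bb' bb
  have h1 := dist_nonneg (x := a) (y := bb')
  have h2 := dist_nonneg (x := bb) (y := bb')
  have hc : dist bb' bb = dist bb bb' := dist_comm _ _
  rcases le_total (dist a bb') L with h | h <;> rcases le_total (dist bb bb') L with h' | h' <;>
    simp only [min_def] <;> split_ifs <;> nlinarith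

private lemma measure_cancel (μ₁ μ₂ κ : Measure X) (hκ : κ Set.univ ≠ ∞)
    (h : μ₁ + κ = μ₂ + κ) : μ₁ = μ₂ := by
  ext E hE
  have h' := congrArg (fun ν : Measure X => ν E) h
  simp only [Measure.add_apply] at h'
  have hκE : κ E ≠ ∞ := fun hh => hκ (top_le_iff.mp (hh ▸ measure_mono (Set.subset_univ E)))
  rw [add_comm (μ₁ E), add_comm (μ₂ E)] at h'
  exact (ENNReal.add_right_inj hκE).mp h'

private lemma key (l : ℝ) (hl : 0 < l) (μ νa νb : Measure X)
    [IsProbabilityMeasure μ] [IsProbabilityMeasure νa] [IsProbabilityMeasure νb]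
    (b b' : X) (ε : ℝ≥0∞) (hetop : ε ≠ ∞) (hεs : ε ≤ νa {b'})
    (hmove : νb + ε • Measure.dirac b' = νa + ε • Measure.dirac b) :
    robustW l μ νb ≤ robustW l μ νa + ε.toReal * min (dist b b') (2 * l) := by
  classical
  set c : X × X → ℝ := fun p => min (dist p.1 p.2) (2 * l) with hc_def
  have hc0 : ∀ p : X × X, 0 ≤ c p := fun p => le_min dist_nonneg (by linarith)
  have hc2 : ∀ p : X × X, c p ≤ 2 * l := fun p => min_le_right _ _
  set Sa := {r : ℝ | ∃ π : Measure (X × X), IsProbabilityMeasure π ∧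
    π.map Prod.fst = μ ∧ π.map Prod.snd = νa ∧ r = ∫ p, c p ∂π} with hSa_def
  set Sb := {r : ℝ | ∃ π : Measure (X × X), IsProbabilityMeasure π ∧
    π.map Prod.fst = μ ∧ π.map Prod.snd = νb ∧ r = ∫ p, c p ∂π} with hSb_def
  have hSa_ne : Sa.Nonempty := by
    refine ⟨∫ p, c p ∂(μ.prod νa), μ.prod νa, inferInstance, ?_, ?_, rfl⟩
    · rw [Measure.map_fst_prod]; simp
    · rw [Measure.map_snd_prod]; simp
  have hSb_bdd : BddBelow Sb := by
    refine ⟨0, ?_⟩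
    rintro r ⟨π, hπ, -, -, rfl⟩
    exact integral_nonneg hc0
  set K := ε.toReal * min (dist b b') (2 * l) with hK_def
  have hKnn : 0 ≤ K := mul_nonneg ENNReal.toReal_nonneg (le_min dist_nonneg (by linarith))
  have H : ∀ r ∈ Sa, sInf Sb ≤ r + K := by
    rintro r ⟨π, hπ, hπ1, hπ2, rfl⟩
    set A : Set (X × X) := Set.univ ×ˢ ({b'} : Set X) with hA_def
    have hA : MeasurableSet A := MeasurableSet.univ.prod (measurableSet_singleton b')
    set s := π A with hs_def
    set ρ := π.restrict A with hρ_def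
    set f := ε / s with hf_def
    have hsnd_pre : Prod.snd ⁻¹' ({b'} : Set X) = A := by
      ext p
      simp only [hA_def, Set.mem_preimage, Set.mem_singleton_iff, Set.mem_prod, Set.mem_univ,
        true_and]
    have hs : s = νa {b'} := by
      rw [← hπ2, Measure.map_apply measurable_snd (measurableSet_singleton b'), hsnd_pre]
    have hεs' : ε ≤ s := hs ▸ hεs
    have hs_fin : s ≠ ∞ := measure_ne_top π A
    have hf1 : f ≤ 1 := ENNReal.div_le_of_le_mul (by simpa using hεs')
    have hf_fin : f ≠ ∞ := (hf1.trans_lt ENNReal.one_lt_top).ne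
    have hfs : f * s = ε := by
      rcases eq_or_ne s 0 with h0 | h0
      · have : ε = 0 := le_antisymm (h0 ▸ hεs') zero_le
        simp [hf_def, h0, this]
      · exact ENNReal.div_mul_cancel h0 hs_fin
    set g : X × X → X × X := fun p => (p.1, b) with hg_def
    have hg : Measurable g := measurable_fst.prodMk measurable_const
    set πt := π.restrict Aᶜ + ((1 - f) • ρ + f • ρ.map g) with hπt_def
    have hdec : π.restrict Aᶜ + ρ = π := by
      rw [add_comm]; exact Measure.restrict_add_restrict_compl hA
    -- first marginal
    have hmapg_fst : (ρ.map g).map Prod.fst = ρ.map Prod.fst := by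
      rw [Measure.map_map measurable_fst hg]
      rfl
    have hfst : πt.map Prod.fst = μ := by
      rw [hπt_def, Measure.map_add _ _ measurable_fst, Measure.map_add _ _ measurable_fst,
        Measure.map_smul, Measure.map_smul, hmapg_fst, ← add_smul,
        tsub_add_cancel_of_le hf1, one_smul, ← Measure.map_add _ _ measurable_fst, hdec, hπ1]
    -- second marginal pieces
    have hρ_snd : ρ.map Prod.snd = s • Measure.dirac b' := by
      ext E hE
      rw [Measure.map_apply measurable_snd hE, hρ_def, Measure.restrict_apply (measurable_snd hE)]
      by_cases hb : b' ∈ E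
      · have hEA : Prod.snd ⁻¹' E ∩ A = A := by
          ext p; simp only [hA_def, Set.mem_inter_iff, Set.mem_preimage, Set.mem_prod,
            Set.mem_univ, Set.mem_singleton_iff, true_and]
          constructor
          · rintro ⟨-, h⟩; exact h
          · intro h; exact ⟨h ▸ hb, h⟩
        rw [hEA]
        simp [Measure.dirac_apply' _ hE, hb, hs_def]
      · have hEA : Prod.snd ⁻¹' E ∩ A = ∅ := by
          ext p; simp only [hA_def, Set.mem_inter_iff, Set.mem_preimage, Set.mem_prod,
            Set.mem_univ, Set.mem_singleton_iff, true_and, Set.mem_empty_iff_false,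
            iff_false, not_and]
          intro hpE hpb; exact hb (hpb ▸ hpE)
        rw [hEA]
        simp [Measure.dirac_apply' _ hE, hb]
    have hρ_univ : ρ Set.univ = s := Measure.restrict_apply_univ A
    have hmapg_snd : (ρ.map g).map Prod.snd = s • Measure.dirac b := by
      rw [Measure.map_map measurable_snd hg]
      have : (Prod.snd ∘ g) = fun _ : X × X => b := rfl
      rw [this, Measure.map_const, hρ_univ]
    have hπ_snd : π.map Prod.snd = (π.restrict Aᶜ).map Prod.snd + s • Measure.dirac b' := by
      conv_lhs => rw [← hdec]
      rw [Measure.map_add _ _ measurable_snd, hρ_snd]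
    have hsub : (1 - f) * s = s - ε := by
      rw [ENNReal.sub_mul (fun _ _ => hs_fin), one_mul, hfs]
    have hsnd : πt.map Prod.snd = νb := by
      apply measure_cancel _ _ (ε • Measure.dirac b') (by simpa using hetop)
      have h1 : πt.map Prod.snd = (π.restrict Aᶜ).map Prod.snd
          + (((1 - f) * s) • Measure.dirac b' + ε • Measure.dirac b) := by
        rw [hπt_def, Measure.map_add _ _ measurable_snd, Measure.map_add _ _ measurable_snd,
          Measure.map_smul, Measure.map_smul, hρ_snd, hmapg_snd, smul_smul, smul_smul, hfs]
      rw [h1]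
      have h2 : ((1 - f) * s) • Measure.dirac b' + ε • Measure.dirac b' = s • Measure.dirac b' := by
        rw [← add_smul, hsub, tsub_add_cancel_of_le hεs']
      calc (π.restrict Aᶜ).map Prod.snd
            + (((1 - f) * s) • Measure.dirac b' + ε • Measure.dirac b) + ε • Measure.dirac b'
          = (π.restrict Aᶜ).map Prod.snd + s • Measure.dirac b' + ε • Measure.dirac b := by
            rw [← h2]; abel
        _ = νa + ε • Measure.dirac b := by rw [← hπ_snd, hπ2]
        _ = νb + ε • Measure.dirac b' := hmove.symm
    -- probability
    have hπt_prob : IsProbabilityMeasure πt := by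
      constructor
      have h := congrArg (fun ν : Measure X => ν Set.univ) hfst
      rw [Measure.map_apply measurable_fst MeasurableSet.univ] at h
      simpa using h
    -- cost estimate
    haveI : IsFiniteMeasure ρ := by
      constructor; rw [hρ_univ]; exact lt_top_iff_ne_top.mpr hs_fin
    haveI : IsFiniteMeasure (π.restrict Aᶜ) := by
      constructor
      rw [Measure.restrict_apply_univ]
      exact lt_of_le_of_lt (measure_mono (Set.subset_univ _)) (measure_lt_top π _)
    haveI : IsFiniteMeasure (ρ.map g) := by
      constructor
      rw [Measure.map_apply hg MeasurableSet.univ]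
      exact lt_of_le_of_lt (measure_mono (Set.subset_univ _)) (measure_lt_top ρ _)
    have hIc : ∀ (κ : Measure (X × X)) [IsFiniteMeasure κ], Integrable c κ :=
      fun κ _ => cost_integ hl c (cost_cont l) hc0 hc2 κ
    have hf1fin : (1 - f) ≠ ∞ := (lt_of_le_of_lt tsub_le_self
      (lt_top_iff_ne_top.mpr ENNReal.one_ne_top)).ne
    have hint1 : Integrable c ((1 - f) • ρ) := (hIc ρ).smul_measure hf1fin
    have hint2 : Integrable c (f • ρ.map g) := (hIc (ρ.map g)).smul_measure hf_fin
    have hIπt : ∫ p, c p ∂πt = ∫ p, c p ∂(π.restrict Aᶜ)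
        + ((1 - f).toReal * ∫ p, c p ∂ρ + f.toReal * ∫ p, c p ∂(ρ.map g)) := by
      rw [hπt_def, integral_add_measure (hIc _) (hint1.add_measure hint2),
        integral_add_measure hint1 hint2, integral_smul_measure, integral_smul_measure,
        smul_eq_mul, smul_eq_mul]
    have hIπ : ∫ p, c p ∂π = ∫ p, c p ∂(π.restrict Aᶜ) + ∫ p, c p ∂ρ := by
      conv_lhs => rw [← hdec]
      rw [integral_add_measure (hIc _) (hIc _)]
    -- the moved integral
    have hIg : ∫ p, c p ∂(ρ.map g) = ∫ p, c (g p) ∂ρ :=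
      integral_map hg.aemeasurable (cost_cont l).aestronglyMeasurable
    have hcg_cont : Continuous fun p : X × X => c (g p) :=
      (cost_cont l).comp (continuous_fst.prodMk continuous_const)
    have hmoved : ∫ p, c (g p) ∂ρ ≤ ∫ p, c p ∂ρ + s.toReal * min (dist b b') (2 * l) := by
      have hae : ∀ᵐ p ∂ρ, c (g p) ≤ c p + min (dist b b') (2 * l) := by
        filter_upwards [ae_restrict_mem hA] with p hp
        have hp2 : p.2 = b' := Set.mem_singleton_iff.mp (Set.mem_prod.mp hp).2
        have := min_tri p.1 b b' (L := 2 * l) (by linarith)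
        simp only [hc_def, hg_def]
        rw [hp2]
        exact this
      have hint3 : Integrable (fun p : X × X => c p + min (dist b b') (2 * l)) ρ :=
        (hIc ρ).add (integrable_const _)
      have h := integral_mono_ae
        (cost_integ hl _ hcg_cont (fun p => hc0 _) (fun p => hc2 _) ρ) hint3 hae
      rwa [integral_add (hIc ρ) (integrable_const _), integral_const, smul_eq_mul,
        measureReal_def, hρ_univ] at h
    -- assembling
    have hmem : (∫ p, c p ∂πt) ∈ Sb := ⟨πt, hπt_prob, hfst, hsnd, rfl⟩
    have hle : sInf Sb ≤ ∫ p, c p ∂πt := csInf_le hSb_bdd hmem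
    have ht1 : (1 - f).toReal = 1 - f.toReal := by
      rw [ENNReal.toReal_sub_of_le hf1 ENNReal.one_ne_top, ENNReal.toReal_one]
    have ht2 : f.toReal * s.toReal = ε.toReal := by
      rw [← ENNReal.toReal_mul, hfs]
    have hfnn : (0 : ℝ) ≤ f.toReal := ENNReal.toReal_nonneg
    have hcost : ∫ p, c p ∂πt ≤ ∫ p, c p ∂π + K := by
      rw [hIπt, hIπ, hIg, ht1, hK_def]
      have h3 : f.toReal * ∫ p, c (g p) ∂ρ
          ≤ f.toReal * ∫ p, c p ∂ρ + ε.toReal * min (dist b b') (2 * l) := by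
        calc f.toReal * ∫ p, c (g p) ∂ρ
            ≤ f.toReal * (∫ p, c p ∂ρ + s.toReal * min (dist b b') (2 * l)) :=
              mul_le_mul_of_nonneg_left hmoved hfnn
          _ = f.toReal * ∫ p, c p ∂ρ + (f.toReal * s.toReal) * min (dist b b') (2 * l) := by
              ring
          _ = f.toReal * ∫ p, c p ∂ρ + ε.toReal * min (dist b b') (2 * l) := by rw [ht2]
      nlinarith [h3]
    linarith
  have hlow : sInf Sb - K ≤ sInf Sa := le_csInf hSa_ne fun r hr => by linarith [H r hr]
  have : robustW l μ νa = sInf Sa := rfl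
  have : robustW l μ νb = sInf Sb := rfl
  show sInf Sb ≤ sInf Sa + K
  linarith

end Aux

private lemma empirical_prob {X : Type*} [MeasurableSpace X] {m : ℕ} (hm : 0 < m)
    (y : Fin m → X) :
    IsProbabilityMeasure (((m : ℝ≥0∞))⁻¹ • ∑ i : Fin m, Measure.dirac (y i)) := by
  have hm0 : (m : ℝ≥0∞) ≠ 0 := by exact_mod_cast hm.ne'
  have hmtop : (m : ℝ≥0∞) ≠ ∞ := ENNReal.natCast_ne_top m
  constructor
  rw [Measure.smul_apply, Measure.finset_sum_apply]
  simp [ENNReal.inv_mul_cancel hm0 hmtop, Finset.card_univ]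

/-- Bounded differences for `W^(λ)`: if the samples `x` and `x'` differ only in
the `j`-th coordinate, then the robust Wasserstein distances of their empirical
measures to `μ` differ by at most `min (d(x_j, x'_j)) (2λ) / m`. -/
theorem robustW_bounded_differences {X : Type*} [MetricSpace X] [PolishSpace X]
    [MeasurableSpace X] [BorelSpace X] (l : ℝ) (hl : 0 < l)
    (m : ℕ) (hm : 0 < m) (x x' : Fin m → X) (j : Fin m)
    (hdiff : ∀ i : Fin m, i ≠ j → x i = x' i)
    (μ : Measure X) [IsProbabilityMeasure μ]
    (μhat μhat' : Measure X)
    (hμhat : μhat = ((m : ℝ≥0∞))⁻¹ • ∑ i : Fin m, Measure.dirac (x i))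
    (hμhat' : μhat' = ((m : ℝ≥0∞))⁻¹ • ∑ i : Fin m, Measure.dirac (x' i)) :
    |robustW l μ μhat - robustW l μ μhat'| ≤ min (dist (x j) (x' j)) (2 * l) / m := by
  classical
  have hm0 : (m : ℝ≥0∞) ≠ 0 := by exact_mod_cast hm.ne'
  have hmtop : (m : ℝ≥0∞) ≠ ∞ := ENNReal.natCast_ne_top m
  haveI h1 : IsProbabilityMeasure μhat := by
    rw [hμhat]; exact empirical_prob hm x
  haveI h2 : IsProbabilityMeasure μhat' := by
    rw [hμhat']; exact empirical_prob hm x'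
  set ε : ℝ≥0∞ := ((m : ℝ≥0∞))⁻¹ with hε_def
  have hetop : ε ≠ ∞ := ENNReal.inv_ne_top.mpr hm0
  have hεunder : ∀ (y : Fin m → X),
      ε ≤ (((m : ℝ≥0∞))⁻¹ • ∑ i : Fin m, Measure.dirac (y i)) {y j} := by
    intro y
    rw [Measure.smul_apply, Measure.finset_sum_apply]
    have hterm : (1 : ℝ≥0∞) ≤ ∑ i : Fin m, Measure.dirac (y i) {y j} := by
      have := Finset.single_le_sum (f := fun i => Measure.dirac (y i) {y j})
        (fun i _ => zero_le) (Finset.mem_univ j)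
      simpa [Measure.dirac_apply_of_mem (Set.mem_singleton (y j))] using this
    calc ε = ε * 1 := (mul_one _).symm
      _ ≤ ε * ∑ i : Fin m, Measure.dirac (y i) {y j} := mul_le_mul_right hterm _

  have hmove : μhat + ε • Measure.dirac (x' j) = μhat' + ε • Measure.dirac (x j) := by
    rw [hμhat, hμhat', hε_def, ← smul_add, ← smul_add]
    congr 1
    have hsplit : ∀ y : Fin m → X, ∑ i : Fin m, Measure.dirac (y i)
        = ∑ i ∈ Finset.univ.erase j, Measure.dirac (y i) + Measure.dirac (y j) :=
      fun y => (Finset.sum_erase_add _ _ (Finset.mem_univ j)).symm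
    rw [hsplit x, hsplit x']
    have heq : ∑ i ∈ Finset.univ.erase j, Measure.dirac (x i)
        = ∑ i ∈ Finset.univ.erase j, Measure.dirac (x' i) :=
      Finset.sum_congr rfl fun i hi => by rw [hdiff i (Finset.ne_of_mem_erase hi)]
    rw [heq]
    abel
  have hεs1 : ε ≤ μhat' {x' j} := by rw [hμhat']; exact hεunder x'
  have hεs2 : ε ≤ μhat {x j} := by rw [hμhat]; exact hεunder x
  have hkey1 : robustW l μ μhat ≤ robustW l μ μhat'
      + ε.toReal * min (dist (x j) (x' j)) (2 * l) :=
    key l hl μ μhat' μhat (x j) (x' j) ε hetop hεs1 hmove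
  have hkey2 : robustW l μ μhat' ≤ robustW l μ μhat
      + ε.toReal * min (dist (x' j) (x j)) (2 * l) :=
    key l hl μ μhat μhat' (x' j) (x j) ε hetop hεs2 hmove.symm
  have hεR : ε.toReal = (m : ℝ)⁻¹ := by
    rw [hε_def, ENNReal.toReal_inv, ENNReal.toReal_natCast]
  have hdc : dist (x' j) (x j) = dist (x j) (x' j) := dist_comm _ _
  rw [hεR] at hkey1 hkey2
  rw [hdc] at hkey2
  have hdiv : min (dist (x j) (x' j)) (2 * l) / m
      = (m : ℝ)⁻¹ * min (dist (x j) (x' j)) (2 * l) := by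
    rw [div_eq_mul_inv, mul_comm]
  rw [abs_sub_le_iff]
  constructor
  · rw [hdiv]; linarith
  · rw [hdiv]; linarith
end
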